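/- arXiv:2410.07623 — 7 statements merged into one kernel-verified Lean document; each statement's English description precedes it below -/
import Mathlib

section
/- Let X be a non-zero real normed linear space and let x, y ∈ X. Then x ⊥₁ y if and only if ‖x + y‖ = ‖x‖ + ‖y‖ and ‖x − y‖ = ‖x‖ + ‖y‖. -/
/-- `x` is 1-orthogonal to `y`: `‖x + k y‖ = ‖x‖ + ‖k y‖` for all `k ∈ ℝ`. -/
def PerpOne {X : Type*} [NormedAddCommGroup X] [NormedSpace ℝ X] (x y : X) : Prop :=
  ∀ k : ℝ, ‖x + k • y‖ = ‖x‖ + ‖k • y‖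

lemma perpOne_aux {X : Type*} [NormedAddCommGroup X] [NormedSpace ℝ X]
    {x y : X} (h : ‖x + y‖ = ‖x‖ + ‖y‖) {k : ℝ} (hk : 0 ≤ k) :
    ‖x + k • y‖ = ‖x‖ + k * ‖y‖ := by
  refine le_antisymm ?_ ?_
  · calc ‖x + k • y‖ ≤ ‖x‖ + ‖k • y‖ := norm_add_le _ _
      _ = ‖x‖ + k * ‖y‖ := by rw [norm_smul, Real.norm_of_nonneg hk]
  · rcases le_or_gt k 1 with h1 | h1
    · have key : ‖x + y‖ ≤ ‖x + k • y‖ + (1 - k) * ‖y‖ := by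
        have heq : x + y = (x + k • y) + (1 - k) • y := by module
        calc ‖x + y‖ = ‖(x + k • y) + (1 - k) • y‖ := by rw [← heq]
          _ ≤ ‖x + k • y‖ + ‖(1 - k) • y‖ := norm_add_le _ _
          _ = ‖x + k • y‖ + (1 - k) * ‖y‖ := by
              rw [norm_smul, Real.norm_of_nonneg (by linarith)]
      linarith
    · have hk0 : 0 < k := by linarith
      have heq : x + y = (1 / k) • (x + k • y) + (1 - 1 / k) • x := by
        match_scalars <;> field_simp <;> ring
      have key : ‖x + y‖ ≤ (1 / k) * ‖x + k • y‖ + (1 - 1 / k) * ‖x‖ := by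
        calc ‖x + y‖ = ‖(1 / k) • (x + k • y) + (1 - 1 / k) • x‖ := by rw [← heq]
          _ ≤ ‖(1 / k) • (x + k • y)‖ + ‖(1 - 1 / k) • x‖ := norm_add_le _ _
          _ = (1 / k) * ‖x + k • y‖ + (1 - 1 / k) * ‖x‖ := by
              rw [norm_smul, norm_smul,
                Real.norm_of_nonneg (by positivity),
                Real.norm_of_nonneg (by rw [sub_nonneg]; exact (div_le_one hk0).2 (by linarith))]
      have h2 : ‖x‖ + ‖y‖ ≤ (1 / k) * ‖x + k • y‖ + (1 - 1 / k) * ‖x‖ := h ▸ key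
      have h3 : (1 / k) * (‖x‖ + k * ‖y‖) ≤ (1 / k) * ‖x + k • y‖ := by
        have : (1 / k) * (‖x‖ + k * ‖y‖) = ‖x‖ + ‖y‖ - (1 - 1 / k) * ‖x‖ := by
          field_simp; ring
        linarith
      exact le_of_mul_le_mul_left (by linarith) (by positivity : (0:ℝ) < 1 / k)

theorem perpOne_iff {X : Type*} [NormedAddCommGroup X] [NormedSpace ℝ X] [Nontrivial X]
    (x y : X) :
    PerpOne x y ↔ (‖x + y‖ = ‖x‖ + ‖y‖ ∧ ‖x - y‖ = ‖x‖ + ‖y‖) := by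
  constructor
  · intro h
    constructor
    · have := h 1; simpa using this
    · have := h (-1); simpa [sub_eq_add_neg] using this
  · rintro ⟨h1, h2⟩ k
    rcases le_or_gt 0 k with hk | hk
    · rw [perpOne_aux h1 hk, norm_smul, Real.norm_of_nonneg hk]
    · have h2' : ‖x + (-y)‖ = ‖x‖ + ‖-y‖ := by
        rw [← sub_eq_add_neg, norm_neg]; exact h2
      have := perpOne_aux h2' (k := -k) (by linarith)
      rw [show x + k • y = x + (-k) • (-y) by module, this,
        norm_smul, Real.norm_of_nonpos hk.le, norm_neg]
end

section
/- Let X be a non-zero real normed linear space and let x, y ∈ X with x ≠ 0 and y ≠ 0. If x ⊥₁ y, then (‖x‖⁻¹ x + ‖y‖⁻¹ y) ⊥∞ (‖x‖⁻¹ x − ‖y‖⁻¹ y). -/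
/-- `x` is ∞-orthogonal to `y`: `‖x + k y‖ = max {‖x‖, ‖k y‖}` for all `k ∈ ℝ`. -/
def PerpInf {X : Type*} [NormedAddCommGroup X] [NormedSpace ℝ X] (x y : X) : Prop :=
  ∀ k : ℝ, ‖x + k • y‖ = max ‖x‖ ‖k • y‖

theorem perpOne_to_perpInf {X : Type*} [NormedAddCommGroup X] [NormedSpace ℝ X] [Nontrivial X]
    (x y : X) (hx : x ≠ 0) (hy : y ≠ 0) (h : PerpOne x y) :
    PerpInf (‖x‖⁻¹ • x + ‖y‖⁻¹ • y) (‖x‖⁻¹ • x - ‖y‖⁻¹ • y) := by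
  have hx' : ‖x‖ ≠ 0 := norm_ne_zero_iff.mpr hx
  have hy' : ‖y‖ ≠ 0 := norm_ne_zero_iff.mpr hy
  have hxp : (0:ℝ) < ‖x‖ := norm_pos_iff.mpr hx
  have hyp : (0:ℝ) < ‖y‖ := norm_pos_iff.mpr hy
  have key : ∀ a b : ℝ, ‖a • (‖x‖⁻¹ • x) + b • (‖y‖⁻¹ • y)‖ = |a| + |b| := by
    intro a b
    rcases eq_or_ne a 0 with ha | ha
    · simp [ha, norm_smul, abs_of_nonneg (norm_nonneg y), hy',
        mul_assoc, inv_mul_cancel₀ hy']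
    · set c : ℝ := b * ‖x‖ / (a * ‖y‖) with hc
      have e : a • (‖x‖⁻¹ • x) + b • (‖y‖⁻¹ • y) = (a * ‖x‖⁻¹) • (x + c • y) := by
        rw [smul_add, smul_smul, smul_smul, smul_smul]
        congr 2
        field_simp [hc]
        rw [hc, mul_div_assoc', eq_div_iff (mul_ne_zero ha hy')]
        ring
      rw [e, norm_smul, h c, norm_smul, hc]
      simp only [Real.norm_eq_abs]
      simp only [abs_mul, abs_div, abs_inv, abs_of_nonneg (norm_nonneg x),
        abs_of_nonneg (norm_nonneg y)]
      have ha' : |a| ≠ 0 := abs_ne_zero.mpr ha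
      field_simp
  intro k
  have e1 : (‖x‖⁻¹ • x + ‖y‖⁻¹ • y) + k • (‖x‖⁻¹ • x - ‖y‖⁻¹ • y)
      = (1 + k) • (‖x‖⁻¹ • x) + (1 - k) • (‖y‖⁻¹ • y) := by
    module
  have e2 : k • (‖x‖⁻¹ • x - ‖y‖⁻¹ • y) = k • (‖x‖⁻¹ • x) + (-k) • (‖y‖⁻¹ • y) := by
    module
  have e3 : (‖x‖⁻¹ • x + ‖y‖⁻¹ • y) = (1:ℝ) • (‖x‖⁻¹ • x) + (1:ℝ) • (‖y‖⁻¹ • y) := by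
    module
  rw [e1, key, e2, key, e3, key]
  rcases le_total 0 k with hk | hk
  · rcases le_total k 1 with h1 | h1
    · rw [abs_of_nonneg (by linarith), abs_of_nonneg (by linarith),
        abs_of_nonpos (by linarith : -k ≤ 0), abs_of_nonneg hk,
        max_eq_left (by norm_num; linarith)]
      norm_num
    · rw [abs_of_nonneg (by linarith), abs_of_nonpos (by linarith),
        abs_of_nonpos (by linarith : -k ≤ 0), abs_of_nonneg hk,
        max_eq_right (by norm_num; linarith)]
      norm_num; ring
  · rcases le_total (-1) k with h1 | h1
    · rw [abs_of_nonneg (by linarith), abs_of_nonneg (by linarith),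
        abs_of_nonneg (by linarith : 0 ≤ -k), abs_of_nonpos hk,
        max_eq_left (by norm_num; linarith)]
      norm_num
    · rw [abs_of_nonpos (by linarith), abs_of_nonneg (by linarith),
        abs_of_nonneg (by linarith : 0 ≤ -k), abs_of_nonpos hk,
        max_eq_right (by norm_num; linarith)]
      norm_num; ring
end

section
/- Let X be a non-zero real normed linear space and let x, y ∈ X with x ≠ 0 and y ≠ 0. If x ⊥∞ y, then (‖x‖⁻¹ x + ‖y‖⁻¹ y) ⊥₁ (‖x‖⁻¹ x − ‖y‖⁻¹ y). -/
theorem perpInf_to_perpOne {X : Type*} [NormedAddCommGroup X] [NormedSpace ℝ X] [Nontrivial X]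
    (x y : X) (hx : x ≠ 0) (hy : y ≠ 0) (h : PerpInf x y) :
    PerpOne (‖x‖⁻¹ • x + ‖y‖⁻¹ • y) (‖x‖⁻¹ • x - ‖y‖⁻¹ • y) := by
  have hxn : ‖x‖ ≠ 0 := norm_ne_zero_iff.mpr hx
  have hyn : ‖y‖ ≠ 0 := norm_ne_zero_iff.mpr hy
  have hxp : (0:ℝ) < ‖x‖ := norm_pos_iff.mpr hx
  have hyp : (0:ℝ) < ‖y‖ := norm_pos_iff.mpr hy
  set u := ‖x‖⁻¹ • x with hu
  set v := ‖y‖⁻¹ • y with hv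
  have key : ∀ t : ℝ, ‖u + t • v‖ = max 1 |t| := by
    intro t
    have hs := h (t * ‖x‖ / ‖y‖)
    have e1 : u + t • v = ‖x‖⁻¹ • (x + (t * ‖x‖ / ‖y‖) • y) := by
      rw [hu, hv, smul_add, smul_smul, smul_smul]
      congr 2
      field_simp
    rw [e1, norm_smul, hs, norm_smul, Real.norm_eq_abs, Real.norm_eq_abs,
      abs_inv, abs_of_nonneg (norm_nonneg x), abs_div, abs_mul,
      abs_of_nonneg (norm_nonneg x), abs_of_nonneg (norm_nonneg y),
      div_mul_cancel₀ _ hyn]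
    rw [show max ‖x‖ (|t| * ‖x‖) = ‖x‖ * max 1 |t| by
      rw [mul_max_of_nonneg _ _ (norm_nonneg x), mul_one, mul_comm]]
    rw [← mul_assoc, inv_mul_cancel₀ hxn, one_mul]
  have hu1 : ‖u + v‖ = 1 := by
    have := key 1; simpa using this
  have huv : ‖u - v‖ = 1 := by
    have := key (-1); simpa [sub_eq_add_neg] using this
  intro k
  have hr : ‖k • (u - v)‖ = |k| := by
    rw [norm_smul, huv, Real.norm_eq_abs, mul_one]
  rw [hr, hu1]
  by_cases hk : (1:ℝ) + k = 0
  · have hk' : k = -1 := by linarith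
    subst hk'
    have e : u + v + (-1:ℝ) • (u - v) = (2:ℝ) • v := by module
    rw [e, norm_smul, Real.norm_eq_abs]
    have hv1 : ‖v‖ = 1 := by
      rw [hv, norm_smul, Real.norm_eq_abs, abs_inv, abs_of_nonneg (norm_nonneg y),
        inv_mul_cancel₀ hyn]
    rw [hv1]
    norm_num
  · have e : u + v + k • (u - v) = (1 + k) • (u + ((1 - k) / (1 + k)) • v) := by
      match_scalars <;> field_simp <;> ring
    rw [e, norm_smul, key, Real.norm_eq_abs, abs_div]
    rcases le_total 0 k with h0 | h0
    · have h1 : |1 + k| = 1 + k := abs_of_nonneg (by linarith)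
      have h2 : |1 - k| ≤ 1 + k := by
        rw [abs_le]; constructor <;> linarith
      rw [max_eq_left (by rw [div_le_one (by rw [h1]; linarith)] <;> linarith [h2, h1] ;)]
      rw [mul_one, h1, abs_of_nonneg h0]
    · have h1 : |1 - k| = 1 - k := abs_of_nonneg (by linarith)
      have hpos : (0:ℝ) < |1 + k| := abs_pos.mpr hk
      have h2 : |1 + k| ≤ 1 - k := by
        rw [abs_le]; constructor <;> linarith
      rw [max_eq_right (by rw [le_div_iff₀ hpos, one_mul]; linarith)]
      rw [mul_div_cancel₀ _ (ne_of_gt hpos), h1, abs_of_nonpos h0]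
      ring
end

section
/- Let X be a non-zero real normed linear space and let x, y ∈ X with x ≠ 0 and y ≠ 0. Then x ⊥∞ y if and only if ‖‖x‖⁻¹ x + ‖y‖⁻¹ y‖ = 1 and ‖‖x‖⁻¹ x − ‖y‖⁻¹ y‖ = 1. -/
lemma perpInf_abs_key {X : Type*} [NormedAddCommGroup X] [NormedSpace ℝ X]
    (u v : X) (hu : ‖u‖ = 1) (hv : ‖v‖ = 1) (h1 : ‖u + v‖ = 1) (h2 : ‖u - v‖ = 1) :
    ∀ a c : ℝ, ‖a • u + c • v‖ = max |a| |c| := by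
  have habs : ∀ a c : ℝ, |a + c| + |a - c| = 2 * max |a| |c| := by
    intro a c
    rcases abs_cases a with ⟨ha, ha'⟩ | ⟨ha, ha'⟩ <;>
      rcases abs_cases c with ⟨hc, hc'⟩ | ⟨hc, hc'⟩ <;>
      rcases abs_cases (a + c) with ⟨hac, _⟩ | ⟨hac, _⟩ <;>
      rcases abs_cases (a - c) with ⟨hsc, _⟩ | ⟨hsc, _⟩ <;>
      rcases max_cases |a| |c| with ⟨hm, _⟩ | ⟨hm, _⟩ <;> linarith
  have ub : ∀ a c : ℝ, ‖a • u + c • v‖ ≤ max |a| |c| := by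
    intro a c
    have hdec : a • u + c • v = ((a + c) / 2) • (u + v) + ((a - c) / 2) • (u - v) := by
      module
    calc ‖a • u + c • v‖ = ‖((a + c) / 2) • (u + v) + ((a - c) / 2) • (u - v)‖ := by
          rw [hdec]
      _ ≤ ‖((a + c) / 2) • (u + v)‖ + ‖((a - c) / 2) • (u - v)‖ := norm_add_le _ _
      _ = |(a + c) / 2| + |(a - c) / 2| := by
          rw [norm_smul, norm_smul, h1, h2, Real.norm_eq_abs, Real.norm_eq_abs]; ring
      _ = max |a| |c| := by
          rw [abs_div, abs_div]
          have := habs a c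
          simp only [abs_two] at *
          linarith
  intro a c
  refine le_antisymm (ub a c) ?_
  have hAu : (2 * a) • u = (a • u + c • v) + (a • u + (-c) • v) := by module
  have hCv : (2 * c) • v = (a • u + c • v) + ((-a) • u + c • v) := by module
  have e1 : ‖(2 * a) • u‖ = 2 * |a| := by
    rw [norm_smul, hu, Real.norm_eq_abs, abs_mul, abs_two]; ring
  have l1 : 2 * |a| ≤ ‖a • u + c • v‖ + max |a| |c| := by
    calc 2 * |a| = ‖(a • u + c • v) + (a • u + (-c) • v)‖ := by rw [← hAu, e1]
      _ ≤ ‖a • u + c • v‖ + ‖a • u + (-c) • v‖ := norm_add_le _ _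
      _ ≤ ‖a • u + c • v‖ + max |a| |-c| := by linarith [ub a (-c)]
      _ = ‖a • u + c • v‖ + max |a| |c| := by rw [abs_neg]
  have e2 : ‖(2 * c) • v‖ = 2 * |c| := by
    rw [norm_smul, hv, Real.norm_eq_abs, abs_mul, abs_two]; ring
  have l2 : 2 * |c| ≤ ‖a • u + c • v‖ + max |a| |c| := by
    calc 2 * |c| = ‖(a • u + c • v) + ((-a) • u + c • v)‖ := by rw [← hCv, e2]
      _ ≤ ‖a • u + c • v‖ + ‖(-a) • u + c • v‖ := norm_add_le _ _
      _ ≤ ‖a • u + c • v‖ + max |-a| |c| := by linarith [ub (-a) c]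
      _ = ‖a • u + c • v‖ + max |a| |c| := by rw [abs_neg]
  rcases max_cases |a| |c| with ⟨hm, _⟩ | ⟨hm, _⟩ <;> rw [hm] <;> [linarith; linarith]

theorem perpInf_iff {X : Type*} [NormedAddCommGroup X] [NormedSpace ℝ X] [Nontrivial X]
    (x y : X) (hx : x ≠ 0) (hy : y ≠ 0) :
    PerpInf x y ↔ (‖‖x‖⁻¹ • x + ‖y‖⁻¹ • y‖ = 1 ∧ ‖‖x‖⁻¹ • x - ‖y‖⁻¹ • y‖ = 1) := by
  have hx0 : (0 : ℝ) < ‖x‖ := norm_pos_iff.mpr hx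
  have hy0 : (0 : ℝ) < ‖y‖ := norm_pos_iff.mpr hy
  constructor
  · intro h
    have hplus : ‖x‖⁻¹ • x + ‖y‖⁻¹ • y = ‖x‖⁻¹ • (x + (‖x‖ / ‖y‖) • y) := by
      rw [smul_add, smul_smul]
      congr 2
      field_simp
    have hminus : ‖x‖⁻¹ • x - ‖y‖⁻¹ • y = ‖x‖⁻¹ • (x + (-(‖x‖ / ‖y‖)) • y) := by
      rw [smul_add, smul_smul]
      rw [sub_eq_add_neg]
      congr 2
      rw [← neg_smul]
      congr 1
      field_simp
    have hk : ∀ s : ℝ, |s| = 1 → ‖x + (s * (‖x‖ / ‖y‖)) • y‖ = ‖x‖ := by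
      intro s hs
      rw [h (s * (‖x‖ / ‖y‖))]
      have : ‖(s * (‖x‖ / ‖y‖)) • y‖ = ‖x‖ := by
        rw [norm_smul, Real.norm_eq_abs, abs_mul, hs, abs_div, abs_of_pos hx0,
          abs_of_pos hy0]
        field_simp
      rw [this, max_self]
    constructor
    · rw [hplus, norm_smul, Real.norm_eq_abs, abs_of_pos (by positivity)]
      have := hk 1 (by norm_num)
      rw [one_mul] at this
      rw [this]
      field_simp
    · rw [hminus, norm_smul, Real.norm_eq_abs, abs_of_pos (by positivity)]
      have := hk (-1) (by norm_num)
      rw [show (-1 : ℝ) * (‖x‖ / ‖y‖) = -(‖x‖ / ‖y‖) by ring] at this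
      rw [this]
      field_simp
  · rintro ⟨h1, h2⟩ k
    have hu : ‖‖x‖⁻¹ • x‖ = 1 := by
      rw [norm_smul, Real.norm_eq_abs, abs_of_pos (by positivity)]
      field_simp
    have hv' : ‖‖y‖⁻¹ • y‖ = 1 := by
      rw [norm_smul, Real.norm_eq_abs, abs_of_pos (by positivity)]
      field_simp
    have key := perpInf_abs_key (‖x‖⁻¹ • x) (‖y‖⁻¹ • y) hu hv' h1 h2 ‖x‖ (k * ‖y‖)
    have hxy : x + k • y = ‖x‖ • (‖x‖⁻¹ • x) + (k * ‖y‖) • (‖y‖⁻¹ • y) := by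
      rw [smul_smul, smul_smul]
      rw [mul_inv_cancel₀ (ne_of_gt hx0), one_smul]
      congr 1
      rw [mul_assoc, mul_inv_cancel₀ (ne_of_gt hy0), mul_one]
    rw [hxy, key, abs_of_pos hx0, abs_mul, abs_of_pos hy0, norm_smul, Real.norm_eq_abs]
end

section
/- Let A be a C*-algebra and let a, b ∈ A with a ≥ 0 and b ≥ 0. Then a b = 0 if and only if for every c ∈ A with −a ≤ c ≤ a and every d ∈ A with −b ≤ d ≤ b, one has c ⊥∞ d (i.e., ‖c + k d‖ = max{‖c‖, ‖k d‖} for all k ∈ ℝ). -/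
section Aux

variable {A : Type*} [NonUnitalCStarAlgebra A] [PartialOrder A] [StarOrderedRing A]

/-- If `a * y = 0` with `a` self-adjoint and `y` nonneg, then `a * √y = 0`. -/
lemma aux_mul_sqrt_eq_zero {a y : A} (ha : IsSelfAdjoint a) (hy : 0 ≤ y)
    (h : a * y = 0) : a * CFC.sqrt y = 0 := by
  set s := CFC.sqrt y with hs
  have hss : s * s = y := CFC.sqrt_mul_sqrt_self y hy
  have hssa : IsSelfAdjoint s := (CFC.sqrt_nonneg (a := y)).isSelfAdjoint
  have key : (a * s) * star (a * s) = 0 := by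
    rw [star_mul, hssa.star_eq, ha.star_eq, show a * s * (s * a) = (a * (s * s)) * a by
      simp only [mul_assoc], hss, h, zero_mul]
  exact (CStarRing.mul_star_self_eq_zero_iff _).mp key

/-- Key domination lemma: if `z` is self-adjoint with `z * b * z = 0` and `-b ≤ d ≤ b`,
then `d * z = 0`. -/
lemma aux_dominated_mul_eq_zero {b d z : A} (hz : IsSelfAdjoint z)
    (hzbz : z * b * z = 0) (h1 : -b ≤ d) (h2 : d ≤ b) : d * z = 0 := by
  have hbd1 : 0 ≤ b - d := sub_nonneg.mpr h2
  have hbd2 : 0 ≤ b + d := by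
    have h1' : -d ≤ b := neg_le.mp h1
    simpa [sub_neg_eq_add] using sub_nonneg.mpr h1'
  have hp : 0 ≤ z * (b - d) * z := by
    simpa [hz.star_eq] using star_left_conjugate_nonneg hbd1 z
  have hq : 0 ≤ z * (b + d) * z := by
    simpa [hz.star_eq] using star_left_conjugate_nonneg hbd2 z
  have hsum : z * (b - d) * z + z * (b + d) * z = 0 := by
    have : z * (b - d) * z + z * (b + d) * z = z * b * z + z * b * z := by
      noncomm_ring
    rw [this, hzbz, add_zero]
  have hp0 : z * (b - d) * z = 0 := by
    have := le_add_of_nonneg_right hq (a := z * (b - d) * z)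
    rw [hsum] at this
    exact le_antisymm this hp
  have hq0 : z * (b + d) * z = 0 := by
    have := le_add_of_nonneg_left hp (a := z * (b + d) * z)
    rw [hsum] at this
    exact le_antisymm this hq
  -- extract `(b - d) * z = 0`
  have extract : ∀ w : A, 0 ≤ w → z * w * z = 0 → w * z = 0 := by
    intro w hw hzwz
    set r := CFC.sqrt w with hr
    have hrr : r * r = w := CFC.sqrt_mul_sqrt_self w hw
    have hrsa : IsSelfAdjoint r := (CFC.sqrt_nonneg (a := w)).isSelfAdjoint
    have : star (r * z) * (r * z) = 0 := by
      rw [star_mul, hrsa.star_eq, hz.star_eq, show z * r * (r * z) = z * (r * r) * z by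
        simp only [mul_assoc], hrr, hzwz]
    have hrz : r * z = 0 := (CStarRing.star_mul_self_eq_zero_iff _).mp this
    calc w * z = r * (r * z) := by rw [← mul_assoc, hrr]
    _ = 0 := by rw [hrz, mul_zero]
  have e1 : (b - d) * z = 0 := extract _ hbd1 hp0
  have e2 : (b + d) * z = 0 := extract _ hbd2 hq0
  have : d * z + d * z = 0 := by
    have := sub_eq_zero.mpr (e2.trans e1.symm)
    rw [show (b + d) * z - (b - d) * z = d * z + d * z by noncomm_ring] at this
    exact this
  have h2 : (2:ℝ) • (d * z) = 0 := by rw [two_smul]; exact this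
  simpa using (smul_eq_zero.mp h2).resolve_left (by norm_num)

/-- Norm additivity for orthogonal self-adjoint elements. -/
lemma aux_norm_add_eq_max {x y : A} (hx : IsSelfAdjoint x) (hy : IsSelfAdjoint y)
    (hxy : x * y = 0) (hyx : y * x = 0) : ‖x + y‖ = max ‖x‖ ‖y‖ := by
  rcases eq_or_ne x 0 with rfl | hx0
  · simp [norm_nonneg]
  rcases eq_or_ne y 0 with rfl | hy0
  · simp [norm_nonneg]
  have hxpos : (0:ℝ) < ‖x‖ := norm_pos_iff.mpr hx0
  have hypos : (0:ℝ) < ‖y‖ := norm_pos_iff.mpr hy0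
  -- lower bounds
  have lb1 : ‖x‖ ≤ ‖x + y‖ := by
    have h1 : x * (x + y) = x * x := by rw [mul_add, hxy, add_zero]
    have h2 : ‖x‖ * ‖x‖ = ‖x * (x + y)‖ := by
      rw [h1]
      have := CStarRing.norm_star_mul_self (x := x)
      rw [hx.star_eq] at this
      exact this.symm
    have h3 : ‖x * (x + y)‖ ≤ ‖x‖ * ‖x + y‖ := norm_mul_le _ _
    have := h2 ▸ h3
    exact le_of_mul_le_mul_left this hxpos
  have lb2 : ‖y‖ ≤ ‖x + y‖ := by
    have h1 : (x + y) * y = y * y := by rw [add_mul, hxy, zero_add]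
    have h2 : ‖y‖ * ‖y‖ = ‖(x + y) * y‖ := by
      rw [h1]
      have := CStarRing.norm_star_mul_self (x := y)
      rw [hy.star_eq] at this
      exact this.symm
    have h3 : ‖(x + y) * y‖ ≤ ‖x + y‖ * ‖y‖ := norm_mul_le _ _
    have h4 : ‖y‖ * ‖y‖ ≤ ‖x + y‖ * ‖y‖ := h2 ▸ h3
    calc ‖y‖ = ‖y‖ * ‖y‖ / ‖y‖ := by field_simp
    _ ≤ ‖x + y‖ * ‖y‖ / ‖y‖ := by gcongr
    _ = ‖x + y‖ := by field_simp
  -- upper bound via iterated squaring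
  set M : ℝ := max ‖x‖ ‖y‖ with hM
  have hMpos : 0 < M := lt_max_of_lt_left hxpos
  have sq_norm : ∀ w : A, IsSelfAdjoint w → ‖w * w‖ = ‖w‖ * ‖w‖ := fun w hw => by
    have := CStarRing.norm_star_mul_self (x := w)
    rwa [hw.star_eq] at this
  have sa_sq : ∀ w : A, IsSelfAdjoint w → IsSelfAdjoint (w * w) := fun w hw => by
    rw [IsSelfAdjoint, star_mul, hw.star_eq]
  set sq : A → A := fun t => t * t with hsqdef
  have main : ∀ m : ℕ,
      (sq^[m] x) * (sq^[m] y) = 0 ∧ (sq^[m] y) * (sq^[m] x) = 0 ∧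
      IsSelfAdjoint (sq^[m] x) ∧ IsSelfAdjoint (sq^[m] y) ∧ IsSelfAdjoint (sq^[m] (x + y)) ∧
      sq^[m] (x + y) = sq^[m] x + sq^[m] y ∧
      ‖sq^[m] x‖ = ‖x‖ ^ (2 ^ m) ∧ ‖sq^[m] y‖ = ‖y‖ ^ (2 ^ m) ∧
      ‖sq^[m] (x + y)‖ = ‖x + y‖ ^ (2 ^ m) := by
    intro m
    induction m with
    | zero => simp [hxy, hyx, hx, hy, hx.add hy]
    | succ n ih =>
      obtain ⟨h1, h2, h3, h4, h5, h6, h7, h8, h9⟩ := ih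
      simp only [Function.iterate_succ', Function.comp_apply]
      have o1 : sq (sq^[n] x) * sq (sq^[n] y) = 0 := by
        simp only [hsqdef]
        calc sq^[n] x * sq^[n] x * (sq^[n] y * sq^[n] y)
            = sq^[n] x * (sq^[n] x * sq^[n] y) * sq^[n] y := by simp only [mul_assoc]
        _ = 0 := by rw [h1]; simp
      have o2 : sq (sq^[n] y) * sq (sq^[n] x) = 0 := by
        simp only [hsqdef]
        calc sq^[n] y * sq^[n] y * (sq^[n] x * sq^[n] x)
            = sq^[n] y * (sq^[n] y * sq^[n] x) * sq^[n] x := by simp only [mul_assoc]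
        _ = 0 := by rw [h2]; simp
      refine ⟨o1, o2, ?_, ?_, ?_, ?_, ?_, ?_, ?_⟩
      · exact sa_sq _ h3
      · exact sa_sq _ h4
      · exact sa_sq _ h5
      · show sq (sq^[n] (x+y)) = sq (sq^[n] x) + sq (sq^[n] y)
        rw [h6]; simp only [hsqdef]
        rw [add_mul, mul_add, mul_add, h1, h2]
        abel
      · show ‖sq (sq^[n] x)‖ = ‖x‖ ^ 2 ^ (n+1)
        rw [hsqdef]
        rw [sq_norm _ h3, h7, ← pow_add]
        congr 1
        ring
      · show ‖sq (sq^[n] y)‖ = ‖y‖ ^ 2 ^ (n+1)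
        rw [hsqdef, sq_norm _ h4, h8, ← pow_add]
        congr 1
        ring
      · show ‖sq (sq^[n] (x+y))‖ = ‖x + y‖ ^ 2 ^ (n+1)
        rw [hsqdef, sq_norm _ h5, h9, ← pow_add]
        congr 1
        ring
  have bound : ∀ m : ℕ, ‖x + y‖ ^ (2 ^ m) ≤ 2 * M ^ (2 ^ m) := by
    intro m
    obtain ⟨h1, h2, h3, h4, h5, h6, h7, h8, h9⟩ := main m
    calc ‖x + y‖ ^ (2 ^ m) = ‖sq^[m] (x + y)‖ := h9.symm
    _ = ‖sq^[m] x + sq^[m] y‖ := by rw [h6]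
    _ ≤ ‖sq^[m] x‖ + ‖sq^[m] y‖ := norm_add_le _ _
    _ = ‖x‖ ^ (2 ^ m) + ‖y‖ ^ (2 ^ m) := by rw [h7, h8]
    _ ≤ M ^ (2 ^ m) + M ^ (2 ^ m) :=
        add_le_add (pow_le_pow_left₀ (norm_nonneg x) (le_max_left _ _) _)
          (pow_le_pow_left₀ (norm_nonneg y) (le_max_right _ _) _)
    _ = 2 * M ^ (2 ^ m) := by ring
  have ub : ‖x + y‖ ≤ M := by
    by_contra hcon
    push_neg at hcon
    have hr : 1 < ‖x + y‖ / M := (one_lt_div hMpos).mpr hcon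
    obtain ⟨N, hN⟩ := pow_unbounded_of_one_lt (2:ℝ) hr
    have hNle : (‖x + y‖ / M) ^ N ≤ (‖x + y‖ / M) ^ (2 ^ N) :=
      pow_le_pow_right₀ hr.le (Nat.lt_two_pow_self (n := N)).le
    have h2N : (2:ℝ) < (‖x + y‖ / M) ^ (2 ^ N) := lt_of_lt_of_le hN hNle
    have := bound N
    rw [div_pow] at h2N
    have : (2:ℝ) * M ^ (2 ^ N) < ‖x + y‖ ^ (2 ^ N) := by
      have hMpow : (0:ℝ) < M ^ (2 ^ N) := pow_pos hMpos _
      calc (2:ℝ) * M ^ (2 ^ N) < (‖x + y‖ ^ (2 ^ N) / M ^ (2 ^ N)) * M ^ (2 ^ N) := by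
            exact mul_lt_mul_of_pos_right h2N hMpow
      _ = ‖x + y‖ ^ (2 ^ N) := by field_simp
    linarith [bound N]
  exact le_antisymm ub (max_le lb1 lb2)

end Aux

theorem mul_eq_zero_iff_extensively_perpInf {A : Type*} [NonUnitalCStarAlgebra A]
    [PartialOrder A] [StarOrderedRing A] (a b : A) (ha : 0 ≤ a) (hb : 0 ≤ b) :
    a * b = 0 ↔
      ∀ c : A, -a ≤ c → c ≤ a → ∀ d : A, -b ≤ d → d ≤ b → PerpInf c d := by
  have ha' : IsSelfAdjoint a := .of_nonneg ha
  have hb' : IsSelfAdjoint b := .of_nonneg hb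
  constructor
  · -- forward direction
    intro h c hc1 hc2 d hd1 hd2
    have hcsa : IsSelfAdjoint c := by
      have h1 : IsSelfAdjoint (a + c) := .of_nonneg (by
        have := neg_le.mp hc1
        simpa [sub_neg_eq_add] using sub_nonneg.mpr (neg_le.mp hc1))
      have : c = (a + c) - a := by abel
      rw [this]
      exact h1.sub ha'
    have hdsa : IsSelfAdjoint d := by
      have h1 : IsSelfAdjoint (b + d) := .of_nonneg (by
        simpa [sub_neg_eq_add] using sub_nonneg.mpr (neg_le.mp hd1))
      have : d = (b + d) - b := by abel
      rw [this]
      exact h1.sub hb'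
    have habs : a * CFC.sqrt b = 0 := aux_mul_sqrt_eq_zero ha' hb h
    have hssa : IsSelfAdjoint (CFC.sqrt b) := (CFC.sqrt_nonneg (a := b)).isSelfAdjoint
    have hsa0 : CFC.sqrt b * a = 0 := by
      have := congrArg star habs
      rwa [star_mul, hssa.star_eq, ha'.star_eq, star_zero] at this
    have hsas : CFC.sqrt b * a * CFC.sqrt b = 0 := by rw [hsa0, zero_mul]
    have hcs : c * CFC.sqrt b = 0 := aux_dominated_mul_eq_zero hssa hsas hc1 hc2
    have hcb : c * b = 0 := by
      rw [← CFC.sqrt_mul_sqrt_self b hb, ← mul_assoc, hcs, zero_mul]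
    have hcbc : c * b * c = 0 := by rw [hcb, zero_mul]
    have hdc : d * c = 0 := aux_dominated_mul_eq_zero hcsa hcbc hd1 hd2
    have hcd : c * d = 0 := by
      have := congrArg star hdc
      rwa [star_mul, hcsa.star_eq, hdsa.star_eq, star_zero] at this
    intro k
    have hk1 : c * (k • d) = 0 := by rw [mul_smul_comm, hcd, smul_zero]
    have hk2 : (k • d) * c = 0 := by rw [smul_mul_assoc, hdc, smul_zero]
    exact aux_norm_add_eq_max hcsa (IsSelfAdjoint.smul (star_trivial k) hdsa) hk1 hk2
  · -- converse direction
    intro H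
    by_contra hab
    have ha0 : a ≠ 0 := by rintro rfl; exact hab (zero_mul b)
    have hb0 : b ≠ 0 := by rintro rfl; exact hab (mul_zero a)
    have hna : (0:ℝ) < ‖a‖ := norm_pos_iff.mpr ha0
    have hnb : (0:ℝ) < ‖b‖ := norm_pos_iff.mpr hb0
    have hnab : (0:ℝ) < ‖a * b‖ := norm_pos_iff.mpr hab
    set δ : ℝ := ‖a * b‖ / (2 * (‖a‖ + ‖b‖)) with hδdef
    have hδpos : 0 < δ := div_pos hnab (by positivity)
    have hδb : δ ≤ ‖b‖ := by
      rw [hδdef, div_le_iff₀ (by positivity)]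
      nlinarith [norm_mul_le a b]
    have hfc : Continuous (fun t : ℝ => min t δ) := continuous_id.min continuous_const
    have hgc : Continuous (fun t : ℝ => max (t - δ) 0) :=
      (continuous_id.sub continuous_const).max continuous_const
    have hf0 : min (0:ℝ) δ = 0 := min_eq_left hδpos.le
    have hg0 : max ((0:ℝ) - δ) 0 = (0:ℝ) := max_eq_right (by linarith)
    set c := cfcₙ (fun t : ℝ => min t δ) a with hcdef
    set d := cfcₙ (fun t : ℝ => min t δ) b with hddef
    set u := cfcₙ (fun t : ℝ => max (t - δ) 0) a with hudef
    set v := cfcₙ (fun t : ℝ => max (t - δ) 0) b with hvdef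
    have hqa : ∀ t ∈ quasispectrum ℝ a, 0 ≤ t := quasispectrum_nonneg_of_nonneg a ha
    have hqb : ∀ t ∈ quasispectrum ℝ b, 0 ≤ t := quasispectrum_nonneg_of_nonneg b hb
    have hc0 : 0 ≤ c := cfcₙ_nonneg fun t ht => le_min (hqa t ht) hδpos.le
    have hd0 : 0 ≤ d := cfcₙ_nonneg fun t ht => le_min (hqb t ht) hδpos.le
    have hu0 : 0 ≤ u := cfcₙ_nonneg fun t _ => le_max_right _ _
    have hv0 : 0 ≤ v := cfcₙ_nonneg fun t _ => le_max_right _ _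
    have hca : c ≤ a := by
      rw [← sub_nonneg, show a - c = cfcₙ (fun t : ℝ => t - min t δ) a from by
        rw [cfcₙ_sub _ _ a (by fun_prop) rfl (hfc.continuousOn) hf0, cfcₙ_id' ℝ a]]
      exact cfcₙ_nonneg fun t _ => sub_nonneg.mpr (min_le_left _ _)
    have hdb : d ≤ b := by
      rw [← sub_nonneg, show b - d = cfcₙ (fun t : ℝ => t - min t δ) b from by
        rw [cfcₙ_sub _ _ b (by fun_prop) rfl (hfc.continuousOn) hf0, cfcₙ_id' ℝ b]]
      exact cfcₙ_nonneg fun t _ => sub_nonneg.mpr (min_le_left _ _)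
    have hcna : -a ≤ c := le_trans (neg_nonpos.mpr ha) hc0
    have hdnb : -b ≤ d := le_trans (neg_nonpos.mpr hb) hd0
    have hcn : ‖c‖ ≤ δ := norm_cfcₙ_le fun t ht => by
      rw [Real.norm_eq_abs, abs_of_nonneg (le_min (hqa t ht) hδpos.le)]
      exact min_le_right _ _
    have hdn : ‖d‖ ≤ δ := norm_cfcₙ_le fun t ht => by
      rw [Real.norm_eq_abs, abs_of_nonneg (le_min (hqb t ht) hδpos.le)]
      exact min_le_right _ _
    have hT : ‖c + d‖ ≤ δ := by
      have hk := H c hcna hca d hdnb hdb 1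
      rw [one_smul] at hk
      rw [hk]
      exact max_le hcn hdn
    have hfg_eq : (fun t : ℝ => max (t - δ) 0 * min t δ) = fun t : ℝ => δ • max (t - δ) 0 := by
      ext t
      rcases le_or_gt t δ with h | h
      · rw [max_eq_right (by linarith : t - δ ≤ 0)]
        simp
      · rw [min_eq_right h.le, max_eq_left (by linarith : (0:ℝ) ≤ t - δ), smul_eq_mul]
        ring
    have huc : u * c = δ • u := by
      rw [hudef, hcdef, ← cfcₙ_mul _ _ a (hgc.continuousOn) hg0 (hfc.continuousOn) hf0,
        hfg_eq, cfcₙ_smul δ _ a (hgc.continuousOn) hg0]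
    have hvd : v * d = δ • v := by
      rw [hvdef, hddef, ← cfcₙ_mul _ _ b (hgc.continuousOn) hg0 (hfc.continuousOn) hf0,
        hfg_eq, cfcₙ_smul δ _ b (hgc.continuousOn) hg0]
    -- `u * v ≠ 0`
    have hau : ‖a - u‖ ≤ δ := by
      rw [show a - u = cfcₙ (fun t : ℝ => t - max (t - δ) 0) a from by
        rw [cfcₙ_sub _ _ a (by fun_prop) rfl (hgc.continuousOn) hg0, cfcₙ_id' ℝ a]]
      refine norm_cfcₙ_le fun t ht => ?_
      rw [Real.norm_eq_abs]
      rcases le_or_gt t δ with h | h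
      · rw [max_eq_right (by linarith), sub_zero, abs_of_nonneg (hqa t ht)]
        exact h
      · rw [max_eq_left (by linarith)]
        rw [show t - (t - δ) = δ by ring, abs_of_nonneg hδpos.le]
    have hbv : ‖b - v‖ ≤ δ := by
      rw [show b - v = cfcₙ (fun t : ℝ => t - max (t - δ) 0) b from by
        rw [cfcₙ_sub _ _ b (by fun_prop) rfl (hgc.continuousOn) hg0, cfcₙ_id' ℝ b]]
      refine norm_cfcₙ_le fun t ht => ?_
      rw [Real.norm_eq_abs]
      rcases le_or_gt t δ with h | h
      · rw [max_eq_right (by linarith), sub_zero, abs_of_nonneg (hqb t ht)]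
        exact h
      · rw [max_eq_left (by linarith)]
        rw [show t - (t - δ) = δ by ring, abs_of_nonneg hδpos.le]
    have hun : ‖u‖ ≤ 2 * ‖a‖ := by
      calc ‖u‖ = ‖a - (a - u)‖ := by rw [sub_sub_cancel]
      _ ≤ ‖a‖ + ‖a - u‖ := norm_sub_le _ _
      _ ≤ ‖a‖ + δ := by linarith
      _ ≤ ‖a‖ + ‖a‖ := by
          have : δ ≤ ‖a‖ := by
            rw [hδdef, div_le_iff₀ (by positivity)]
            nlinarith [norm_mul_le a b]
          linarith
      _ = 2 * ‖a‖ := by ring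
    have huv0 : u * v ≠ 0 := by
      intro h0
      have key : a * b = (a - u) * b + u * (b - v) + u * v := by noncomm_ring
      have hle : ‖a * b‖ ≤ δ * ‖b‖ + 2 * ‖a‖ * δ := by
        calc ‖a * b‖ = ‖(a - u) * b + u * (b - v) + u * v‖ := by rw [← key]
        _ ≤ ‖(a - u) * b + u * (b - v)‖ + ‖u * v‖ := norm_add_le _ _
        _ ≤ ‖(a - u) * b‖ + ‖u * (b - v)‖ + ‖u * v‖ := by
            have := norm_add_le ((a - u) * b) (u * (b - v))
            linarith
        _ ≤ ‖a - u‖ * ‖b‖ + ‖u‖ * ‖b - v‖ + 0 := by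
            rw [h0, norm_zero]
            have h1 := norm_mul_le (a - u) b
            have h2 := norm_mul_le u (b - v)
            linarith
        _ ≤ δ * ‖b‖ + 2 * ‖a‖ * δ := by
            have h2 : ‖u‖ * ‖b - v‖ ≤ (2 * ‖a‖) * δ := by
              apply mul_le_mul hun hbv (norm_nonneg _) (by positivity)
            have h1 : ‖a - u‖ * ‖b‖ ≤ δ * ‖b‖ :=
              mul_le_mul_of_nonneg_right hau (norm_nonneg _)
            linarith
      have hkey : δ * (2 * (‖a‖ + ‖b‖)) = ‖a * b‖ := by
        rw [hδdef]
        exact div_mul_cancel₀ _ (by positivity)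
      nlinarith [mul_pos hδpos hnb]
    -- the contradiction
    set x := u * v with hxdef
    have husa : IsSelfAdjoint u := .of_nonneg hu0
    have hvsa : IsSelfAdjoint v := .of_nonneg hv0
    have hx_star : star x = v * u := by rw [hxdef, star_mul, husa.star_eq, hvsa.star_eq]
    have hTsa : IsSelfAdjoint (c + d) := (IsSelfAdjoint.of_nonneg hc0).add (.of_nonneg hd0)
    have conj1 : star x * (c + d) * x ≤ ‖c + d‖ • (star x * x) :=
      CStarAlgebra.star_left_conjugate_le_norm_smul hTsa
    have conj2 : ‖c + d‖ • (star x * x) ≤ δ • (star x * x) := by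
      rw [← sub_nonneg, ← sub_smul]
      have hr0 : 0 ≤ δ - ‖c + d‖ := sub_nonneg.mpr hT
      have heq : (δ - ‖c + d‖) • (star x * x) =
          star (Real.sqrt (δ - ‖c + d‖) • x) * (Real.sqrt (δ - ‖c + d‖) • x) := by
        rw [star_smul, star_trivial (Real.sqrt (δ - ‖c + d‖)), smul_mul_assoc, mul_smul_comm, smul_smul,
          Real.mul_self_sqrt hr0]
      rw [heq]
      exact star_mul_self_nonneg _
    have expand : star x * (c + d) * x = δ • (star x * x) + star x * d * x := by
      have h1 : star x * c * x = δ • (star x * x) := by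
        rw [hx_star, hxdef]
        calc v * u * c * (u * v) = v * (u * c) * (u * v) := by simp only [mul_assoc]
        _ = v * (δ • u) * (u * v) := by rw [huc]
        _ = δ • (v * u * (u * v)) := by
            rw [mul_smul_comm, smul_mul_assoc]
      rw [mul_add, add_mul, h1]
    have hw_le : star x * d * x ≤ 0 := by
      have hh := conj1.trans conj2
      rw [expand] at hh
      exact (add_le_iff_nonpos_right _).mp hh
    have hw_ge : 0 ≤ star x * d * x := star_left_conjugate_nonneg hd0 x
    have hw : star x * d * x = 0 := le_antisymm hw_le hw_ge
    have hsdsa : IsSelfAdjoint (CFC.sqrt d) := (CFC.sqrt_nonneg (a := d)).isSelfAdjoint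
    have hsd : CFC.sqrt d * x = 0 := by
      apply (CStarRing.star_mul_self_eq_zero_iff _).mp
      rw [star_mul, hsdsa.star_eq]
      calc star x * CFC.sqrt d * (CFC.sqrt d * x)
          = star x * (CFC.sqrt d * CFC.sqrt d) * x := by simp only [mul_assoc]
      _ = 0 := by rw [CFC.sqrt_mul_sqrt_self d hd0, hw]
    have hdx : d * x = 0 := by
      rw [← CFC.sqrt_mul_sqrt_self d hd0, mul_assoc, hsd, mul_zero]
    have hvuv : v * (u * v) = 0 := by
      have h1 : v * (d * x) = 0 := by rw [hdx, mul_zero]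
      rw [← mul_assoc, hvd, smul_mul_assoc] at h1
      have := (smul_eq_zero.mp h1).resolve_left (ne_of_gt hδpos)
      rwa [hxdef] at this
    have hfin : u * v = 0 := by
      have hrr : CFC.sqrt u * CFC.sqrt u = u := CFC.sqrt_mul_sqrt_self u hu0
      have hrsa : IsSelfAdjoint (CFC.sqrt u) := (CFC.sqrt_nonneg (a := u)).isSelfAdjoint
      have hrv : CFC.sqrt u * v = 0 := by
        apply (CStarRing.star_mul_self_eq_zero_iff _).mp
        rw [star_mul, hrsa.star_eq, hvsa.star_eq]
        calc v * CFC.sqrt u * (CFC.sqrt u * v)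
            = v * ((CFC.sqrt u * CFC.sqrt u) * v) := by simp only [mul_assoc]
        _ = 0 := by rw [hrr]; exact hvuv
      rw [← hrr, mul_assoc, hrv, mul_zero]
    exact huv0 hfin
end

section
/- Let X be a non-zero real normed linear space, let x ∈ X with ‖x‖ = 1/2, and let X̃ = ℝ ⊕₁ X with norm ‖(α, x)‖ = |α| + ‖x‖ and positive cone X̃⁺ = {(α, x) : ‖x‖ ≤ α}. Then (1/2, x) has the order unit property in X̃ if and only if {(β, z) ∈ X̃ : there exists λ > 0 with λ (1/2, x) + (β, z) ∈ X̃⁺ and λ (1/2, x) − (β, z) ∈ X̃⁺} = ℝ · (1/2, x). -/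
section Adjoin

variable {X : Type*} [NormedAddCommGroup X] [NormedSpace ℝ X]

/-- Membership in the positive cone of `X̃ = ℝ ⊕₁ X`: `(α, x) ∈ X̃⁺` iff `‖x‖ ≤ α`. -/
def tildePos (p : ℝ × X) : Prop := ‖p.2‖ ≤ p.1

/-- The norm of `X̃ = ℝ ⊕₁ X`: `‖(α, x)‖ = |α| + ‖x‖`. -/
noncomputable def tildeNorm (p : ℝ × X) : ℝ := |p.1| + ‖p.2‖

/-- `u ∈ X̃⁺` has the order unit property in `X̃`: whenever `λ u + v ∈ X̃⁺` and
`λ u - v ∈ X̃⁺` for some `λ > 0`, also `‖v‖ u + v ∈ X̃⁺` and `‖v‖ u - v ∈ X̃⁺`. -/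
noncomputable def tildeHasOUP (u : ℝ × X) : Prop :=
  ∀ v : ℝ × X, (∃ l : ℝ, 0 < l ∧ tildePos (l • u + v) ∧ tildePos (l • u - v)) →
    tildePos (tildeNorm v • u + v) ∧ tildePos (tildeNorm v • u - v)

end Adjoin
theorem tilde_hasOUP_iff {X : Type*} [NormedAddCommGroup X] [NormedSpace ℝ X] [Nontrivial X]
    (x : X) (hx : ‖x‖ = 1 / 2) :
    tildeHasOUP ((1 / 2 : ℝ), x) ↔
      {v : ℝ × X | ∃ l : ℝ, 0 < l ∧ tildePos (l • ((1 / 2 : ℝ), x) + v) ∧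
          tildePos (l • ((1 / 2 : ℝ), x) - v)} =
        {v : ℝ × X | ∃ t : ℝ, v = t • ((1 / 2 : ℝ), x)} := by
  have hpos : ∀ s : ℝ, 0 ≤ s → tildePos (s • ((1/2 : ℝ), x)) := by
    intro s hs
    simp only [tildePos, Prod.smul_mk, smul_eq_mul]
    rw [norm_smul, hx, Real.norm_eq_abs, abs_of_nonneg hs]
  constructor
  · intro hOUP
    ext v
    obtain ⟨b, z⟩ := v
    simp only [Set.mem_setOf_eq]
    constructor
    · rintro ⟨l, hl, h1, h2⟩
      simp only [tildePos, Prod.smul_mk, Prod.mk_add_mk, Prod.mk_sub_mk, smul_eq_mul] at h1 h2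
      set w : X := z - (2*b) • x with hw
      have habs : (0:ℝ) ≤ 2*|b| - 2*b := by
        have := le_abs_self b; linarith
      have habs' : (0:ℝ) ≤ 2*|b| + 2*b := by
        have := neg_abs_le b; linarith
      have key1 : ‖(l + 2*|b|) • x + w‖ ≤ (l + 2*|b|) * (1/2) + 0 := by
        have heq : (l + 2*|b|) • x + w = (l • x + z) + (2*|b| - 2*b) • x := by
          rw [hw]; module
        rw [heq]
        calc ‖(l • x + z) + (2*|b| - 2*b) • x‖
            ≤ ‖l • x + z‖ + ‖(2*|b| - 2*b) • x‖ := norm_add_le _ _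
          _ ≤ (l * (1/2) + b) + (2*|b| - 2*b) * (1/2) := by
              refine add_le_add h1 ?_
              rw [norm_smul, Real.norm_eq_abs, abs_of_nonneg habs, hx]
          _ = (l + 2*|b|) * (1/2) + 0 := by ring
      have key2 : ‖(l + 2*|b|) • x - w‖ ≤ (l + 2*|b|) * (1/2) - 0 := by
        have heq : (l + 2*|b|) • x - w = (l • x - z) + (2*|b| + 2*b) • x := by
          rw [hw]; module
        rw [heq]
        calc ‖(l • x - z) + (2*|b| + 2*b) • x‖
            ≤ ‖l • x - z‖ + ‖(2*|b| + 2*b) • x‖ := norm_add_le _ _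
          _ ≤ (l * (1/2) - b) + (2*|b| + 2*b) * (1/2) := by
              refine add_le_add h2 ?_
              rw [norm_smul, Real.norm_eq_abs, abs_of_nonneg habs', hx]
          _ = (l + 2*|b|) * (1/2) - 0 := by ring
      have hdom : ∃ l' : ℝ, 0 < l' ∧ tildePos (l' • ((1/2 : ℝ), x) + ((0:ℝ), w)) ∧
          tildePos (l' • ((1/2 : ℝ), x) - ((0:ℝ), w)) := by
        refine ⟨l + 2*|b|, by have := abs_nonneg b; linarith, ?_, ?_⟩
        · simpa [tildePos, Prod.smul_mk, Prod.mk_add_mk, smul_eq_mul] using key1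
        · simpa [tildePos, Prod.smul_mk, Prod.mk_sub_mk, smul_eq_mul] using key2
      obtain ⟨g1, g2⟩ := hOUP ((0:ℝ), w) hdom
      simp only [tildePos, tildeNorm, Prod.smul_mk, Prod.mk_add_mk, Prod.mk_sub_mk,
        smul_eq_mul, abs_zero, zero_add, add_zero, sub_zero, norm_zero] at g1 g2
      have hw0 : w = 0 := by
        have h2w : ‖w + w‖ ≤ ‖w‖ := by
          have heq : w + w = (‖w‖ • x + w) - (‖w‖ • x - w) := by module
          calc ‖w + w‖ = ‖(‖w‖ • x + w) - (‖w‖ • x - w)‖ := by rw [heq]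
            _ ≤ ‖‖w‖ • x + w‖ + ‖‖w‖ • x - w‖ := norm_sub_le _ _
            _ ≤ ‖w‖ * (1/2) + ‖w‖ * (1/2) := add_le_add g1 g2
            _ = ‖w‖ := by ring
        have h2w' : ‖w + w‖ = 2 * ‖w‖ := by
          rw [← two_smul ℝ w, norm_smul]; norm_num
        have : ‖w‖ ≤ 0 := by rw [h2w'] at h2w; linarith
        exact norm_le_zero_iff.mp this
      refine ⟨2*b, ?_⟩
      have hz : z = (2*b) • x := by
        have := sub_eq_zero.mp (hw ▸ hw0 : z - (2*b) • x = 0)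
        exact this
      rw [hz]
      simp only [Prod.smul_mk, Prod.mk.injEq, smul_eq_mul]
      exact ⟨by ring, trivial⟩
    · rintro ⟨t, ht⟩
      rw [ht]
      refine ⟨|t| + 1, by positivity, ?_, ?_⟩
      · rw [← add_smul]
        exact hpos _ (by have := neg_abs_le t; linarith)
      · rw [← sub_smul]
        exact hpos _ (by have := le_abs_self t; linarith)
  · intro hset
    intro v hv
    have hv' : v ∈ {v : ℝ × X | ∃ t : ℝ, v = t • ((1 / 2 : ℝ), x)} := by
      rw [← hset]; exact hv
    obtain ⟨t, rfl⟩ := hv'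
    have hnorm : tildeNorm (t • ((1/2 : ℝ), x)) = |t| := by
      simp only [tildeNorm, Prod.smul_mk, smul_eq_mul]
      rw [norm_smul, hx, Real.norm_eq_abs, abs_mul]
      norm_num [abs_of_nonneg]
      ring
    rw [hnorm]
    constructor
    · rw [← add_smul]
      exact hpos _ (by have := neg_abs_le t; linarith)
    · rw [← sub_smul]
      exact hpos _ (by have := le_abs_self t; linarith)
end

section
/- Let X be a non-zero real normed linear space and let X̃ = ℝ ⊕₁ X with norm ‖(α, x)‖ = |α| + ‖x‖ and positive cone X̃⁺ = {(α, x) : ‖x‖ ≤ α}. Then (1/2, x) has the order unit property in X̃ for every x ∈ X with ‖x‖ = 1/2 if and only if X is strictly convex. -/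
theorem tilde_hasOUP_forall_iff_strictConvex {X : Type*} [NormedAddCommGroup X]
    [NormedSpace ℝ X] [Nontrivial X] :
    (∀ x : X, ‖x‖ = 1 / 2 → tildeHasOUP ((1 / 2 : ℝ), x)) ↔
      (∀ y z : X, ‖y‖ = 1 → ‖z‖ = 1 → y ≠ z → ‖y + z‖ < 2) := by
  constructor
  · -- OUP → strict convexity
    intro h y z hy hz hne
    have hle : ‖y + z‖ ≤ 2 := by
      calc ‖y + z‖ ≤ ‖y‖ + ‖z‖ := norm_add_le y z
        _ = 2 := by rw [hy, hz]; norm_num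
    rcases lt_or_eq_of_le hle with hlt | heq
    · exact hlt
    exfalso
    set x : X := (4 : ℝ)⁻¹ • (y + z) with hxdef
    have hx : ‖x‖ = 1 / 2 := by
      rw [hxdef, norm_smul, heq]; norm_num
    set w : X := (4 : ℝ)⁻¹ • (y - z) with hwdef
    have hw0 : w ≠ 0 := by
      simp only [hwdef, smul_ne_zero_iff, sub_ne_zero]
      exact ⟨by norm_num, hne⟩
    have := h x hx ⟨(0 : ℝ), w⟩ ⟨1, one_pos, ?_, ?_⟩
    · obtain ⟨h1, h2⟩ := this
      simp only [tildePos, tildeNorm, Prod.smul_mk, smul_eq_mul, Prod.fst_add, Prod.snd_add,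
        Prod.fst_sub, Prod.snd_sub, abs_zero, zero_add, norm_zero, add_zero, sub_zero] at h1 h2
      set N : ℝ := ‖w‖
      have hN : 0 < N := norm_pos_iff.2 hw0
      have key : ‖(N • x + w) - (N • x - w)‖ ≤ N := by
        calc ‖(N • x + w) - (N • x - w)‖ ≤ ‖N • x + w‖ + ‖N • x - w‖ := norm_sub_le _ _
          _ ≤ N * (1/2) + N * (1/2) := add_le_add h1 h2
          _ = N := by ring
      have : ‖(N • x + w) - (N • x - w)‖ = 2 * N := by
        have : (N • x + w) - (N • x - w) = (2 : ℝ) • w := by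
          module
        rw [this, norm_smul]; norm_num; rfl
      linarith
    · show ‖_‖ ≤ _
      have : ((1:ℝ) • ((1 / 2 : ℝ), x) + ((0:ℝ), w)).2 = (2:ℝ)⁻¹ • y := by
        show (1:ℝ) • x + w = (2:ℝ)⁻¹ • y
        rw [hxdef, hwdef]; module
      rw [this, norm_smul, hy]
      norm_num
    · show ‖_‖ ≤ _
      have : ((1:ℝ) • ((1 / 2 : ℝ), x) - ((0:ℝ), w)).2 = (2:ℝ)⁻¹ • z := by
        show (1:ℝ) • x - w = (2:ℝ)⁻¹ • z
        rw [hxdef, hwdef]; module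
      rw [this, norm_smul, hz]
      norm_num
  · -- strict convexity → OUP
    intro hsc
    have : StrictConvexSpace ℝ X :=
      StrictConvexSpace.of_norm_add_ne_two fun a b ha hb hne => (hsc a b ha hb hne).ne
    intro x hx v hv
    obtain ⟨l, hl, h1, h2⟩ := hv
    obtain ⟨β, w⟩ := v
    simp only [tildePos, Prod.smul_mk, smul_eq_mul, Prod.fst_add, Prod.snd_add,
      Prod.fst_sub, Prod.snd_sub] at h1 h2
    set p : X := l • x + w with hp
    set q : X := l • x - w with hq
    have hpq : p + q = (2 * l) • x := by rw [hp, hq]; module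
    have hpqnorm : ‖p + q‖ = l := by
      rw [hpq, norm_smul, hx]
      rw [Real.norm_of_nonneg (by linarith)]
      ring
    have htri : ‖p‖ + ‖q‖ = ‖p + q‖ := by
      have := norm_add_le p q
      rw [hpqnorm]; linarith
    have hpn : ‖p‖ = l * (1/2) + β := by
      rw [hpqnorm] at htri; linarith
    have hqn : ‖q‖ = l * (1/2) - β := by
      rw [hpqnorm] at htri; linarith
    -- same ray
    have hray : SameRay ℝ p q := by
      by_contra hcon
      exact absurd htri (norm_add_lt_of_not_sameRay hcon).ne'
    -- claim w = (2β) x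
    have hkey : w = (2 * β) • x := by
      rcases hray with hp0 | hq0 | ⟨r, s, hr, hs, hrs⟩
      · -- p = 0
        have hβ : β = -(l * (1/2)) := by
          rw [hp0] at hpn; simp at hpn; linarith
        have : w = -(l • x) := by
          have := hp0; rw [hp] at this
          linear_combination (norm := module) this
        rw [this, hβ]; module
      · -- q = 0
        have hβ : β = l * (1/2) := by
          rw [hq0] at hqn; simp at hqn; linarith
        have : w = l • x := by
          have := hq0; rw [hq] at this
          linear_combination (norm := module) -this
        rw [this, hβ]; module
      · have hnorm : r * ‖p‖ = s * ‖q‖ := by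
          have := congrArg norm hrs
          rwa [norm_smul, norm_smul, Real.norm_of_nonneg hr.le,
            Real.norm_of_nonneg hs.le] at this
        rw [hpn, hqn] at hnorm
        -- (r+s) w = (s - r) l x  and (s-r) l = 2 (r+s) β
        have hw : (r + s) • w = ((s - r) * l) • x := by
          have := hrs; rw [hp, hq] at this
          linear_combination (norm := module) this
        have hβl : (s - r) * l = 2 * (r + s) * β := by nlinarith
        have hrs0 : r + s ≠ 0 := by positivity
        have : (r + s) • w = (r + s) • ((2 * β) • x) := by
          rw [hw, hβl, smul_smul]; ring_nf
        exact smul_right_injective X hrs0 this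
    -- finish
    have hNv : tildeNorm (β, w) = 2 * |β| := by
      rw [tildeNorm, hkey, norm_smul, hx]
      simp [abs_mul]
      ring
    constructor
    · simp only [tildePos, Prod.smul_mk, smul_eq_mul, Prod.fst_add, Prod.snd_add]
      rw [hNv, hkey,
        show (2 * |β|) • x + (2 * β) • x = (2 * |β| + 2 * β) • x from by module, norm_smul, hx,
        Real.norm_of_nonneg (by cases abs_cases β <;> linarith)]
      cases abs_cases β <;> nlinarith
    · simp only [tildePos, Prod.smul_mk, smul_eq_mul, Prod.fst_sub, Prod.snd_sub]
      rw [hNv, hkey,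
        show (2 * |β|) • x - (2 * β) • x = (2 * |β| - 2 * β) • x from by module, norm_smul, hx,
        Real.norm_of_nonneg (by cases abs_cases β <;> linarith)]
      cases abs_cases β <;> nlinarith
end
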